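/- arXiv:2406.08600 — 2 statements merged into one kernel-verified Lean document; each statement's English description precedes it below -/
import Mathlib

section
/- Let Φ be a Blum measure and let f = {f_i : ℕ → ℕ | i ∈ ℕ} be a family of total functions satisfying conditions (a) and (b) only. Then there exists a total computable function t : ℕ → ℕ such that for every i, f_i(n) ≤ t(n) for all but finitely many n, and C_Φ(t) = ⋃_{i ∈ ℕ} C_Φ(f_i). -/
open Filter

/-- A Blum complexity measure over the alphabet `α` (strings are `List α`), bundled with
an acceptable Gödel numbering `num` of the partial computable functions `List α →. List α`.
`meas e x` is the amount of resource used by the `e`-th program on input `x`. -/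
structure BlumMeasure (α : Type) [Primcodable α] where
  num : ℕ → List α →. List α
  meas : ℕ → List α →. ℕ
  num_partrec : Partrec₂ num
  num_acceptable : ∀ ψ : ℕ → List α →. List α, Partrec₂ ψ →
    ∃ c : ℕ → ℕ, Computable c ∧ ∀ e, num (c e) = ψ e
  meas_partrec : Partrec₂ meas
  dom_iff : ∀ e x, (meas e x).Dom ↔ (num e x).Dom
  meas_decidable : ∃ d : ℕ → List α → ℕ → Bool,
    Computable (fun p : ℕ × List α × ℕ => d p.1 p.2.1 p.2.2) ∧
    ∀ e x m, (d e x m = true ↔ m ∈ meas e x)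

/-- The Blum complexity class `C_Φ(t)`: partial functions `φ_e` with
`Φ(e,x) ≤ t(|x|)` for all but finitely many strings `x`. -/
def BlumClass {α : Type} [Primcodable α] (M : BlumMeasure α) (t : ℕ → ℕ) :
    Set (List α →. List α) :=
  { g | ∃ e, M.num e = g ∧
      ∀ᶠ x in (Filter.cofinite : Filter (List α)), ∃ m ∈ M.meas e x, m ≤ t x.length }

open Classical in
/-- The characteristic function of a language, valued in two fixed symbols `zero`, `one`. -/
noncomputable def chiFun {α : Type} (zero one : α) (L : Set (List α)) :
    List α →. List α :=
  fun x => Part.some (if x ∈ L then [one] else [zero])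

/-- The Blum language class `L_Φ(t)`: languages whose characteristic function lies in `C_Φ(t)`. -/
def BlumLangClass {α : Type} [Primcodable α] (M : BlumMeasure α)
    (zero one : α) (t : ℕ → ℕ) : Set (Set (List α)) :=
  { L | chiFun zero one L ∈ BlumClass M t }

/-- Iterated pairing `⟨x, y₁, …, y_k⟩ = ⟨x, ⟨y₁, …⟩⟩`, with `⟨x⟩ = ⟨x, ε⟩`. -/
def tuple {α : Type} (pair : List α → List α → List α) :
    List α → List (List α) → List α
  | x, [] => pair x []
  | x, [y] => pair x y
  | x, y :: z :: ys => pair x (tuple pair y (z :: ys))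

/-- Alternating block quantification over strings of prescribed lengths;
`b = true` means the next quantifier is `∃`, and quantifiers alternate. -/
def altQuant {α : Type} : Bool → List ℕ → (List (List α) → Prop) → Prop
  | true, n :: ns, P =>
      ∃ y : List α, y.length = n ∧ altQuant false ns fun ys => P (y :: ys)
  | false, n :: ns, P =>
      ∀ y : List α, y.length = n → altQuant true ns fun ys => P (y :: ys)
  | _, [], P => P []

/-- The complexity class operator `Σ_k^F` applied to a class `C` of languages. -/
def SigmaOp {α : Type} (pair : List α → List α → List α) (F : Set (ℕ → ℕ)) (k : ℕ)
    (C : Set (Set (List α))) : Set (Set (List α)) :=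
  { L | ∃ fs : List (ℕ → ℕ), fs.length = k ∧ (∀ f ∈ fs, f ∈ F) ∧ ∃ L' ∈ C,
      ∀ x : List α, x ∈ L ↔
        altQuant true (fs.map fun f => f x.length) fun ys => tuple pair x ys ∈ L' }

/-- The class `Σ_k L_Φ^F(t)`: the resource bound `t(|⟨x⟩|)` is independent of the witnesses. -/
def SigmaClass {α : Type} [Primcodable α] (M : BlumMeasure α)
    (pair : List α → List α → List α) (zero one : α) (F : Set (ℕ → ℕ)) (k : ℕ)
    (t : ℕ → ℕ) : Set (Set (List α)) :=
  { L | ∃ fs : List (ℕ → ℕ), fs.length = k ∧ (∀ f ∈ fs, f ∈ F) ∧ ∃ e : ℕ,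
      (∀ x v, v ∈ M.num e x → v = [zero] ∨ v = [one]) ∧
      (∀ᶠ p in (Filter.cofinite : Filter (List α × List (List α))),
        p.2.length = k →
          ∃ m ∈ M.meas e (tuple pair p.1 p.2), m ≤ t (pair p.1 []).length) ∧
      ∀ x : List α, x ∈ L ↔
        altQuant true (fs.map fun f => f x.length) fun ys =>
          [one] ∈ M.num e (tuple pair x ys) }

/-- A witness criterion `ω = (R₁, h₁, R₂, h₂)`: total computable relations and functions. -/
structure WitnessCriterion where
  R1 : ℕ → ℕ → Bool
  h1 : ℕ → ℕ
  R2 : ℕ → ℕ → Bool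
  h2 : ℕ → ℕ
  R1_comp : Computable₂ R1
  h1_comp : Computable h1
  R2_comp : Computable₂ R2
  h2_comp : Computable h2

/-- Cardinality of the witness set `W(f, L', x)` (with witness length `n = f(|x|)`). -/
noncomputable def wCount {α : Type} (pair : List α → List α → List α)
    (L' : Set (List α)) (n : ℕ) (x : List α) : ℕ :=
  Set.ncard { y : List α | y.length = n ∧ pair x y ∈ L' }

/-- The complexity class operator `W_ω^F` applied to a class `C` of languages. -/
def WOp {α : Type} (pair : List α → List α → List α) (F : Set (ℕ → ℕ))
    (ω : WitnessCriterion) (C : Set (Set (List α))) : Set (Set (List α)) :=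
  { L | ∃ f ∈ F, ∃ L' ∈ C, ∀ x : List α,
      (x ∈ L → ω.R1 (wCount pair L' (f x.length) x) (ω.h1 (f x.length)) = true) ∧
      (x ∉ L → ω.R2 (wCount pair L' (f x.length) x) (ω.h2 (f x.length)) = true) }

/-- The class `W_ω L_Φ^F(t)`: the resource bound `t(|⟨x⟩|)` is independent of the witness. -/
noncomputable def WClass {α : Type} [Primcodable α] (M : BlumMeasure α)
    (pair : List α → List α → List α) (zero one : α) (F : Set (ℕ → ℕ))
    (ω : WitnessCriterion) (t : ℕ → ℕ) : Set (Set (List α)) :=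
  { L | ∃ f ∈ F, ∃ e : ℕ,
      (∀ x v, v ∈ M.num e x → v = [zero] ∨ v = [one]) ∧
      (∀ᶠ p in (Filter.cofinite : Filter (List α × List α)),
        ∃ m ∈ M.meas e (pair p.1 p.2), m ≤ t (pair p.1 []).length) ∧
      ∀ x : List α,
        (x ∈ L →
          ω.R1 (Set.ncard { y : List α | y.length = f x.length ∧
            [one] ∈ M.num e (pair x y) }) (ω.h1 (f x.length)) = true) ∧
        (x ∉ L →
          ω.R2 (Set.ncard { y : List α | y.length = f x.length ∧
            [one] ∈ M.num e (pair x y) }) (ω.h2 (f x.length)) = true) }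

/-- Conditions (a)–(e): `f` (as an indexed family `i ↦ f i`) is an acceptable collection. -/
def AcceptableCollection (f : ℕ → ℕ → ℕ) : Prop :=
  Computable₂ f ∧
  (∀ i j, i ≤ j → ∀ᶠ n in Filter.atTop, f i n ≤ f j n) ∧
  (∀ i, Monotone (f i)) ∧
  (∃ i, ∀ B : ℕ, ∃ n, B < f i n) ∧
  (∀ i (js : List ℕ) (C : ℕ), ∃ k, ∀ᶠ n in Filter.atTop,
      f i (n + (js.map fun j => f j n).sum +
        C * (1 + Nat.log 2 n + (js.dropLast.map fun j => Nat.log 2 (1 + f j n)).sum))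
        ≤ f k n)

set_option maxHeartbeats 1000000
namespace MMU

/-! ### Cumulative maximum of the family -/

def fmax (f : ℕ → ℕ → ℕ) : ℕ → ℕ → ℕ
  | 0, n => f 0 n
  | j+1, n => max (fmax f j n) (f (j+1) n)

def Fb (f : ℕ → ℕ → ℕ) (j n : ℕ) : ℕ := fmax f (min j n) n

lemma le_fmax (f : ℕ → ℕ → ℕ) {i j n : ℕ} (h : i ≤ j) : f i n ≤ fmax f j n := by
  induction j with
  | zero => simp_all [fmax]
  | succ j ih =>
    rcases Nat.lt_succ_iff_lt_or_eq.mp (Nat.lt_succ_of_le h) with h' | h'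
    · exact le_trans (ih (Nat.lt_succ_iff.mp h')) (le_max_left _ _)
    · subst h'; exact le_max_right _ _

lemma fmax_mono (f : ℕ → ℕ → ℕ) {j j' n : ℕ} (h : j ≤ j') : fmax f j n ≤ fmax f j' n := by
  induction j' with
  | zero => simp_all
  | succ j' ih =>
    rcases Nat.lt_succ_iff_lt_or_eq.mp (Nat.lt_succ_of_le h) with h' | h'
    · exact le_trans (ih (Nat.lt_succ_iff.mp h')) (le_max_left _ _)
    · subst h'; exact le_rfl

lemma le_Fb (f : ℕ → ℕ → ℕ) {i j n : ℕ} (hij : i ≤ j) (hin : i ≤ n) : f i n ≤ Fb f j n :=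
  le_fmax f (le_min hij hin)

lemma Fb_mono (f : ℕ → ℕ → ℕ) {j j' n : ℕ} (h : j ≤ j') : Fb f j n ≤ Fb f j' n :=
  fmax_mono f (min_le_min_right _ h)

lemma fmax_ae_le (f : ℕ → ℕ → ℕ)
    (hb : ∀ i j, i ≤ j → ∀ᶠ n in Filter.atTop, f i n ≤ f j n) (j : ℕ) :
    ∀ᶠ n in Filter.atTop, fmax f j n ≤ f j n := by
  induction j with
  | zero => filter_upwards with n; simp [fmax]
  | succ j ih =>
    filter_upwards [ih, hb j (j+1) (Nat.le_succ j)] with n h1 h2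
    simp only [fmax, max_le_iff]
    exact ⟨le_trans h1 h2, le_rfl⟩

lemma Fb_ae_le (f : ℕ → ℕ → ℕ)
    (hb : ∀ i j, i ≤ j → ∀ᶠ n in Filter.atTop, f i n ≤ f j n) (j : ℕ) :
    ∀ᶠ n in Filter.atTop, Fb f j n ≤ f j n := by
  filter_upwards [fmax_ae_le f hb j, Filter.eventually_ge_atTop j] with n h1 h2
  simpa [Fb, min_eq_left h2] using h1

lemma fmax_comp {f : ℕ → ℕ → ℕ} (hf : Computable₂ f) : Computable₂ (fmax f) := by
  have h : Computable fun p : (ℕ × ℕ) × ℕ × ℕ => max p.2.2 (f (p.2.1 + 1) p.1.2) :=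
    (Primrec.nat_max.to_comp).comp (Computable.snd.comp Computable.snd)
      (hf.comp (Computable.succ.comp (Computable.fst.comp Computable.snd))
        (Computable.snd.comp Computable.fst))
  have : Computable fun p : ℕ × ℕ =>
      Nat.rec (motive := fun _ => ℕ) (f 0 p.2) (fun y IH => max IH (f (y+1) p.2)) p.1 :=
    Computable.nat_rec Computable.fst (hf.comp (Computable.const 0) Computable.snd) h.to₂
  refine this.of_eq fun p => ?_
  induction p.1 with
  | zero => rfl
  | succ j ih => simp [fmax, ih, max_comm]

lemma Fb_comp {f : ℕ → ℕ → ℕ} (hf : Computable₂ f) : Computable₂ (Fb f) :=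
  (fmax_comp hf).comp
    ((Primrec.nat_min.to_comp).comp Computable.fst Computable.snd) Computable.snd

/-! ### Bounded Boolean search -/

def rangeAny (p : ℕ → Bool) : ℕ → Bool
  | 0 => false
  | k+1 => rangeAny p k || p k

lemma rangeAny_iff (p : ℕ → Bool) (k : ℕ) : rangeAny p k = true ↔ ∃ i < k, p i = true := by
  induction k with
  | zero => simp [rangeAny]
  | succ k ih =>
    simp only [rangeAny, Bool.or_eq_true, ih]
    constructor
    · rintro (⟨i, hi, hp⟩ | hp)
      · exact ⟨i, Nat.lt_succ_of_lt hi, hp⟩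
      · exact ⟨k, Nat.lt_succ_self k, hp⟩
    · rintro ⟨i, hi, hp⟩
      rcases Nat.lt_succ_iff_lt_or_eq.mp hi with h | h
      · exact Or.inl ⟨i, h, hp⟩
      · subst h; exact Or.inr hp

lemma rangeAny_comp {α : Type} [Primcodable α] {p : α → ℕ → Bool} (hp : Computable₂ p) :
    Computable₂ fun a k => rangeAny (p a) k := by
  have h : Computable fun q : (α × ℕ) × ℕ × Bool => (q.2.2 || p q.1.1 q.2.1) := by
    have := Computable.cond (c := fun q : (α × ℕ) × ℕ × Bool => q.2.2)
      (f := fun _ => true) (g := fun q : (α × ℕ) × ℕ × Bool => p q.1.1 q.2.1)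
      (Computable.snd.comp Computable.snd) (Computable.const true)
      (hp.comp (Computable.fst.comp Computable.fst) (Computable.fst.comp Computable.snd))
    refine this.of_eq fun q => ?_
    show (bif q.2.2 then true else p q.1.1 q.2.1) = (q.2.2 || p q.1.1 q.2.1)
    cases q.2.2 <;> rfl
  have : Computable fun q : α × ℕ =>
      Nat.rec (motive := fun _ => Bool) false (fun y IH => IH || p q.1 y) q.2 :=
    Computable.nat_rec Computable.snd (Computable.const false) h.to₂
  refine this.of_eq fun q => ?_
  induction q.2 with
  | zero => rfl
  | succ k ih => simp [rangeAny, ih]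

/-! ### All strings of a given length -/

def allStr {α : Type} (univ : List α) : ℕ → List (List α)
  | 0 => [[]]
  | n+1 => (allStr univ n).flatMap fun x => univ.map fun a => a :: x

lemma mem_allStr {α : Type} (univ : List α) (hu : ∀ a : α, a ∈ univ) (n : ℕ) (x : List α) :
    x ∈ allStr univ n ↔ x.length = n := by
  induction n generalizing x with
  | zero => simp [allStr, List.length_eq_zero_iff]
  | succ n ih =>
    simp only [allStr, List.mem_flatMap, List.mem_map]
    constructor
    · rintro ⟨y, hy, a, _, rfl⟩
      simp [ih y |>.mp hy]
    · intro hx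
      cases x with
      | nil => simp at hx
      | cons a y =>
        exact ⟨y, (ih y).mpr (by simpa using hx), a, hu a, rfl⟩

lemma allStr_comp {α : Type} [Primcodable α] (univ : List α) : Computable (allStr univ) := by
  have hstep : Primrec fun u : List (List α) => u.flatMap fun x => univ.map fun a => a :: x :=
    Primrec.list_flatMap Primrec.id
      ((Primrec.list_map (Primrec.const univ)
        ((Primrec.list_cons.comp Primrec.snd Primrec.fst).to₂)).comp Primrec.snd).to₂
  have h : Computable fun q : ℕ × ℕ × List (List α) =>
      q.2.2.flatMap fun x => univ.map fun a => a :: x :=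
    hstep.to_comp.comp (Computable.snd.comp Computable.snd)
  have : Computable fun n : ℕ =>
      Nat.rec (motive := fun _ => List (List α)) [[]]
        (fun _ IH => IH.flatMap fun x => univ.map fun a => a :: x) n :=
    Computable.nat_rec Computable.id (Computable.const [[]]) h.to₂
  refine this.of_eq fun n => ?_
  induction n with
  | zero => rfl
  | succ n ih => simp [allStr, ih]

/-! ### The failure test -/

def failF {α : Type} (d : ℕ → List α → ℕ → Bool) (univ : List α) (e n B : ℕ) : Bool :=
  rangeAny (fun i => !(rangeAny (fun m => d e (((allStr univ n)[i]?).getD []) m) (B+1)))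
    (allStr univ n).length

lemma failF_iff {α : Type} (d : ℕ → List α → ℕ → Bool) (univ : List α)
    (hu : ∀ a : α, a ∈ univ) (e n B : ℕ) :
    failF d univ e n B = true ↔
      ∃ x : List α, x.length = n ∧ ∀ m, m ≤ B → d e x m = false := by
  rw [failF, rangeAny_iff]
  constructor
  · rintro ⟨i, hi, hp⟩
    rw [Bool.not_eq_true'] at hp
    set x := ((allStr univ n)[i]?).getD [] with hx
    refine ⟨x, ?_, ?_⟩
    · have hmem : x ∈ allStr univ n := by
        rw [hx, List.getElem?_eq_getElem hi]
        exact List.getElem_mem hi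
      exact (mem_allStr univ hu n x).mp hmem
    · intro m hm
      by_contra hd
      rw [Bool.not_eq_false] at hd
      have : rangeAny (fun m => d e x m) (B+1) = true :=
        (rangeAny_iff _ _).mpr ⟨m, by omega, hd⟩
      rw [this] at hp; simp at hp
  · rintro ⟨x, hx, hd⟩
    have hmem : x ∈ allStr univ n := (mem_allStr univ hu n x).mpr hx
    obtain ⟨i, hi, hgi⟩ := List.mem_iff_getElem.mp hmem
    refine ⟨i, hi, ?_⟩
    rw [Bool.not_eq_true']
    rw [List.getElem?_eq_getElem hi, Option.getD_some, hgi]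
    rw [← Bool.not_eq_true, rangeAny_iff]
    rintro ⟨m, hm, hdm⟩
    rw [hd m (by omega)] at hdm; simp at hdm

lemma failF_comp {α : Type} [Primcodable α] {d : ℕ → List α → ℕ → Bool} (univ : List α)
    (hd : Computable fun p : ℕ × List α × ℕ => d p.1 p.2.1 p.2.2) :
    Computable fun t : ℕ × ℕ × ℕ => failF d univ t.1 t.2.1 t.2.2 := by
  have hA : Computable (allStr univ) := allStr_comp univ
  have hx : Computable₂ fun (t : ℕ × ℕ × ℕ) (i : ℕ) =>
      ((allStr univ t.2.1)[i]?).getD ([] : List α) :=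
    Computable.option_getD
      (Computable.list_getElem?.comp
        (hA.comp (Computable.fst.comp (Computable.snd.comp Computable.fst)))
        Computable.snd)
      (Computable.const [])
  have hinner : Computable₂ fun (q : (ℕ × ℕ × ℕ) × ℕ) (m : ℕ) =>
      d q.1.1 (((allStr univ q.1.2.1)[q.2]?).getD []) m := by
    have htriple : Computable fun r : ((ℕ × ℕ × ℕ) × ℕ) × ℕ =>
        (r.1.1.1, ((((allStr univ r.1.1.2.1)[r.1.2]?).getD ([] : List α)), r.2)) :=
      (Computable.fst.comp (Computable.fst.comp Computable.fst)).pair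
        ((hx.comp (Computable.fst.comp Computable.fst)
          (Computable.snd.comp Computable.fst)).pair Computable.snd)
    have hcomp := hd.comp htriple
    exact hcomp
  have hp : Computable₂ fun (t : ℕ × ℕ × ℕ) (i : ℕ) =>
      !(rangeAny (fun m => d t.1 (((allStr univ t.2.1)[i]?).getD []) m) (t.2.2+1)) := by
    have hr : Computable fun q : (ℕ × ℕ × ℕ) × ℕ =>
        rangeAny (fun m => d q.1.1 (((allStr univ q.1.2.1)[q.2]?).getD []) m) (q.1.2.2+1) :=
      (rangeAny_comp hinner).comp Computable.id
        (Computable.succ.comp (Computable.snd.comp (Computable.snd.comp Computable.fst)))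
    have hnp := (Primrec.dom_bool Bool.not).to_comp.comp hr
    exact hnp
  have hfin := (rangeAny_comp hp).comp (Computable.id (α := ℕ × ℕ × ℕ))
    (Computable.list_length.comp (hA.comp (Computable.fst.comp Computable.snd)))
  exact hfin

/-! ### Mapping over a range, computably -/

lemma range_map_comp {α : Type} [Primcodable α] {g : α → ℕ → ℕ} (hg : Computable₂ g) :
    Computable₂ fun a k => (List.range k).map (g a) := by
  have h : Computable fun p : (α × ℕ) × ℕ × List ℕ => p.2.2 ++ [g p.1.1 p.2.1] :=
    Computable.list_append.comp (Computable.snd.comp Computable.snd)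
      ((Computable.list_cons.comp
          (hg.comp (Computable.fst.comp Computable.fst)
            (Computable.fst.comp Computable.snd))
          (Computable.const [])))
  have : Computable fun p : α × ℕ =>
      Nat.rec (motive := fun _ => List ℕ) [] (fun y IH => IH ++ [g p.1 y]) p.2 :=
    Computable.nat_rec Computable.snd (Computable.const []) h.to₂
  refine this.of_eq fun p => ?_
  induction p.2 with
  | zero => rfl
  | succ k ih => simp [List.range_succ, ih]

/-! ### The guess dynamics -/

def gget (u : List ℕ) (e : ℕ) : ℕ := (u[e]?).getD e

lemma gget_comp : Computable₂ gget :=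
  Computable.option_getD (Computable.list_getElem?.comp Computable.fst Computable.snd)
    Computable.snd

def guessL (fail : ℕ → ℕ → ℕ → Bool) : ℕ → List ℕ
  | 0 => []
  | n+1 => (List.range (n+1)).map fun e =>
      if fail e n (gget (guessL fail n) e) then n+1 else gget (guessL fail n) e

def guess (fail : ℕ → ℕ → ℕ → Bool) (n e : ℕ) : ℕ := gget (guessL fail n) e

lemma gget_range_map (h : ℕ → ℕ) (k e : ℕ) :
    gget ((List.range k).map h) e = if e < k then h e else e := by
  unfold gget
  split
  · next he => simp [List.getElem?_map, List.getElem?_range he]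
  · next he => rw [List.getElem?_eq_none (by simpa using le_of_not_gt he)]; rfl

variable {fail : ℕ → ℕ → ℕ → Bool}

lemma guess_succ_of_le {e n : ℕ} (h : e ≤ n) :
    guess fail (n+1) e = if fail e n (guess fail n e) then n+1 else guess fail n e := by
  show gget ((List.range (n+1)).map _) e = _
  rw [gget_range_map]
  simp only [Nat.lt_succ_of_le h, if_true]
  rfl

lemma guess_succ_of_gt {e n : ℕ} (h : n < e) : guess fail (n+1) e = e := by
  show gget ((List.range (n+1)).map _) e = _
  rw [gget_range_map, if_neg (by omega : ¬ e < n + 1)]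

lemma guess_of_le {e n : ℕ} (h : n ≤ e) : guess fail n e = e := by
  induction n with
  | zero => rfl
  | succ n ih => rw [guess_succ_of_gt (by omega)]

lemma self_le_guess (n e : ℕ) : e ≤ guess fail n e := by
  induction n with
  | zero => exact le_rfl
  | succ n ih =>
    rcases le_or_gt e n with h | h
    · rw [guess_succ_of_le h]; split
      · omega
      · exact ih
    · rw [guess_succ_of_gt h]

lemma guess_le (n e : ℕ) : guess fail n e ≤ max e n := by
  induction n with
  | zero => simp [guess, guessL, gget]
  | succ n ih =>
    rcases le_or_gt e n with h | h
    · rw [guess_succ_of_le h]; split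
      · omega
      · omega
    · rw [guess_succ_of_gt h]; omega

lemma guess_mono (e : ℕ) : Monotone (fun n => guess fail n e) := by
  apply monotone_nat_of_le_succ
  intro n
  rcases le_or_gt e n with h | h
  · rw [guess_succ_of_le h]; split
    · have := guess_le (fail := fail) n e; omega
    · exact le_rfl
  · rw [guess_succ_of_gt h, guess_of_le (by omega)]

lemma guess_stable {e N : ℕ} (he : e ≤ N)
    (hstab : ∀ k, N ≤ k → fail e k (guess fail k e) = false) :
    ∀ n, N ≤ n → guess fail n e = guess fail N e := by
  intro n hn
  induction n with
  | zero => rw [Nat.le_zero.mp hn]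
  | succ n ih =>
    rcases Nat.lt_succ_iff_lt_or_eq.mp (Nat.lt_succ_of_le hn) with h | h
    · have hNn : N ≤ n := by omega
      rw [guess_succ_of_le (by omega), hstab n hNn, if_neg (by simp), ih hNn]
    · rw [h]

lemma guessL_comp (hfail : Computable fun t : ℕ × ℕ × ℕ => fail t.1 t.2.1 t.2.2) :
    Computable (guessL fail) := by
  have hentry : Computable₂ fun (q : ℕ × List ℕ) (e : ℕ) =>
      if fail e q.1 (gget q.2 e) then q.1 + 1 else gget q.2 e := by
    have hg : Computable fun r : (ℕ × List ℕ) × ℕ => gget r.1.2 r.2 :=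
      gget_comp.comp (Computable.snd.comp Computable.fst) Computable.snd
    have hc : Computable fun r : (ℕ × List ℕ) × ℕ => fail r.2 r.1.1 (gget r.1.2 r.2) :=
      hfail.comp (Computable.snd.pair ((Computable.fst.comp Computable.fst).pair hg))
    have hcond := Computable.cond hc
      (Computable.succ.comp (Computable.fst.comp Computable.fst)) hg
    refine hcond.of_eq fun r => ?_
    cases h : fail r.2 r.1.1 (gget r.1.2 r.2) <;> simp [h]
  have hstep : Computable fun p : ℕ × ℕ × List ℕ =>
      (List.range (p.2.1+1)).map fun e =>
        if fail e p.2.1 (gget p.2.2 e) then p.2.1 + 1 else gget p.2.2 e := by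
    have hmap := (range_map_comp hentry).comp
      (Computable.snd : Computable fun p : ℕ × ℕ × List ℕ => p.2)
      (Computable.succ.comp (Computable.fst.comp Computable.snd))
    exact hmap
  have hrec : Computable fun n : ℕ =>
      Nat.rec (motive := fun _ => List ℕ) []
        (fun y IH => (List.range (y+1)).map fun e =>
          if fail e y (gget IH e) then y + 1 else gget IH e) n :=
    Computable.nat_rec Computable.id (Computable.const []) hstep.to₂
  refine hrec.of_eq fun n => ?_
  induction n with
  | zero => rfl
  | succ n ih => rw [guessL, ← ih]

lemma guess_comp (hfail : Computable fun t : ℕ × ℕ × ℕ => fail t.1 t.2.1 t.2.2) :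
    Computable₂ (guess fail) :=
  gget_comp.comp ((guessL_comp hfail).comp Computable.fst) Computable.snd

/-! ### The bound `t` -/

def tAux (F : ℕ → ℕ → ℕ) (fail : ℕ → ℕ → ℕ → Bool) (n : ℕ) : ℕ → ℕ
  | 0 => F n n
  | e+1 => if fail e n (guess fail n e) then
      min (tAux F fail n e) (F (guess fail n e) n) else tAux F fail n e

def tFun (F : ℕ → ℕ → ℕ) (fail : ℕ → ℕ → ℕ → Bool) (n : ℕ) : ℕ := tAux F fail n (n+1)

variable {F : ℕ → ℕ → ℕ}

lemma tAux_le (n k : ℕ) : tAux F fail n k ≤ F n n := by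
  induction k with
  | zero => exact le_rfl
  | succ k ih =>
    rw [tAux]; split
    · exact le_trans (min_le_left _ _) ih
    · exact ih

lemma tAux_le_of_fail {n e k : ℕ} (hk : e < k) (hf : fail e n (guess fail n e) = true) :
    tAux F fail n k ≤ F (guess fail n e) n := by
  induction k with
  | zero => omega
  | succ k ih =>
    rcases Nat.lt_succ_iff_lt_or_eq.mp hk with h | h
    · rw [tAux]; split
      · exact le_trans (min_le_left _ _) (ih h)
      · exact ih h
    · subst h; rw [tAux, if_pos hf]; exact min_le_right _ _

lemma le_tAux {n k c : ℕ} (h0 : c ≤ F n n)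
    (h : ∀ e < k, fail e n (guess fail n e) = true → c ≤ F (guess fail n e) n) :
    c ≤ tAux F fail n k := by
  induction k with
  | zero => exact h0
  | succ k ih =>
    rw [tAux]; split
    · next hf => exact le_min (ih fun e he => h e (by omega)) (h k (by omega) hf)
    · exact ih fun e he => h e (by omega)

lemma tFun_le (n : ℕ) : tFun F fail n ≤ F n n := tAux_le n _

lemma tFun_le_of_fail {n e : ℕ} (he : e ≤ n) (hf : fail e n (guess fail n e) = true) :
    tFun F fail n ≤ F (guess fail n e) n := tAux_le_of_fail (by omega) hf

lemma le_tFun {n c : ℕ} (h0 : c ≤ F n n)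
    (h : ∀ e ≤ n, fail e n (guess fail n e) = true → c ≤ F (guess fail n e) n) :
    c ≤ tFun F fail n := le_tAux h0 fun e he => h e (by omega)

lemma tFun_comp (hF : Computable₂ F)
    (hfail : Computable fun t : ℕ × ℕ × ℕ => fail t.1 t.2.1 t.2.2) :
    Computable (tFun F fail) := by
  have hguess : Computable₂ (guess fail) := guess_comp hfail
  have hstep : Computable fun p : ℕ × ℕ × ℕ =>
      if fail p.2.1 p.1 (guess fail p.1 p.2.1)
      then min p.2.2 (F (guess fail p.1 p.2.1) p.1) else p.2.2 := by
    have hg : Computable fun p : ℕ × ℕ × ℕ => guess fail p.1 p.2.1 :=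
      hguess.comp Computable.fst (Computable.fst.comp Computable.snd)
    have hc : Computable fun p : ℕ × ℕ × ℕ => fail p.2.1 p.1 (guess fail p.1 p.2.1) :=
      hfail.comp ((Computable.fst.comp Computable.snd).pair (Computable.fst.pair hg))
    have hm : Computable fun p : ℕ × ℕ × ℕ => min p.2.2 (F (guess fail p.1 p.2.1) p.1) :=
      Primrec.nat_min.to_comp.comp (Computable.snd.comp Computable.snd)
        (hF.comp hg Computable.fst)
    have hcond := Computable.cond hc hm (Computable.snd.comp Computable.snd)
    refine hcond.of_eq fun p => ?_
    cases h : fail p.2.1 p.1 (guess fail p.1 p.2.1) <;> simp [h]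
  have hrec : Computable fun n : ℕ =>
      Nat.rec (motive := fun _ => ℕ) (F n n)
        (fun e IH => if fail e n (guess fail n e) then
          min IH (F (guess fail n e) n) else IH) (n+1) :=
    Computable.nat_rec Computable.succ (hF.comp Computable.id Computable.id) hstep.to₂
  refine hrec.of_eq fun n => ?_
  have key : ∀ k, Nat.rec (motive := fun _ => ℕ) (F n n)
      (fun e IH => if fail e n (guess fail n e) then
        min IH (F (guess fail n e) n) else IH) k = tAux F fail n k := by
    intro k
    induction k with
    | zero => rfl
    | succ k ih => rw [tAux, ← ih]
  exact key (n+1)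

end MMU

/-- **McCreight–Meyer Union Theorem** (classical form): for any Blum measure `M` and
family `f` satisfying conditions (a) and (b) only, there is a total computable `t`
with `f i ≤ t` a.e. for each `i` and `C_Φ(t) = ⋃ i, C_Φ(f i)`. -/
theorem mccreight_meyer_union
    (α : Type) [Primcodable α] [Fintype α] (hcard : 2 ≤ Fintype.card α)
    (M : BlumMeasure α) (f : ℕ → ℕ → ℕ)
    (ha : Computable₂ f)
    (hb : ∀ i j, i ≤ j → ∀ᶠ n in Filter.atTop, f i n ≤ f j n) :
    ∃ t : ℕ → ℕ, Computable t ∧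
      (∀ i, ∀ᶠ n in Filter.atTop, f i n ≤ t n) ∧
      BlumClass M t = ⋃ i, BlumClass M (f i) := by
  classical
  obtain ⟨d, hdcomp, hd⟩ := M.meas_decidable
  set univ : List α := (Finset.univ : Finset α).toList with huniv
  have hu : ∀ a : α, a ∈ univ := fun a => by simp [huniv]
  set fl : ℕ → ℕ → ℕ → Bool :=
    fun e n G => MMU.failF d univ e n (MMU.Fb f G n) with hfl
  set t : ℕ → ℕ := MMU.tFun (MMU.Fb f) fl with ht
  -- characterization of failure
  have hfail : ∀ e n G, fl e n G = true ↔
      ∃ x : List α, x.length = n ∧ ∀ m, m ≤ MMU.Fb f G n → m ∉ M.meas e x := by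
    intro e n G
    simp only [hfl]
    rw [MMU.failF_iff d univ hu]
    refine exists_congr fun x => and_congr_right fun _ => ?_
    constructor
    · intro h m hm hmem
      have h1 := h m hm
      rw [(hd e x m).mpr hmem] at h1
      simp at h1
    · intro h m hm
      by_contra hne
      rw [Bool.not_eq_false] at hne
      exact h m hm ((hd e x m).mp hne)
  have hnofail : ∀ e n G, fl e n G = false →
      ∀ x : List α, x.length = n → ∃ m ∈ M.meas e x, m ≤ MMU.Fb f G n := by
    intro e n G hB x hx
    by_contra hno
    have : fl e n G = true := by
      refine (hfail e n G).mpr ⟨x, hx, fun m hm hmem => hno ⟨m, hmem, hm⟩⟩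
    rw [this] at hB; simp at hB
  -- computability
  have hflc : Computable fun p : ℕ × ℕ × ℕ => fl p.1 p.2.1 p.2.2 := by
    simp only [hfl]
    have hFb := MMU.Fb_comp ha
    have h1 := MMU.failF_comp univ hdcomp
    have h2 := h1.comp ((Computable.fst (α := ℕ) (β := ℕ × ℕ)).pair
      ((Computable.fst.comp Computable.snd).pair
        (hFb.comp (Computable.snd.comp Computable.snd)
          (Computable.fst.comp Computable.snd))))
    exact h2.of_eq fun p => rfl
  have htc : Computable t := MMU.tFun_comp (MMU.Fb_comp ha) hflc
  -- cofinite transfer along lengths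
  have hlen : ∀ Q : ℕ → Prop, (∀ᶠ n in Filter.atTop, Q n) →
      ∀ᶠ x : List α in Filter.cofinite, Q x.length := by
    intro Q hQ
    rw [Filter.eventually_atTop] at hQ
    obtain ⟨N, hN⟩ := hQ
    rw [Filter.eventually_cofinite]
    refine Set.Finite.subset (List.finite_length_lt α N) ?_
    intro x hx
    simp only [Set.mem_setOf_eq] at hx ⊢
    by_contra h
    exact hx (hN _ (by omega))
  -- domination
  have hdom : ∀ i, ∀ᶠ n in Filter.atTop, f i n ≤ t n := by
    intro i
    have hev : ∀ e ∈ Set.Iio i, ∀ᶠ n in Filter.atTop,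
        (fl e n (MMU.guess fl n e) = true → i ≤ MMU.guess fl n e) := by
      intro e _
      by_cases hc : ∃ m, max e i ≤ m ∧ fl e m (MMU.guess fl m e) = true
      · obtain ⟨m, hm, hfm⟩ := hc
        rw [Filter.eventually_atTop]
        refine ⟨m + 1, fun n hn _ => ?_⟩
        have h1 : MMU.guess fl (m+1) e = m + 1 := by
          rw [MMU.guess_succ_of_le (by omega), if_pos hfm]
        have h2 : MMU.guess fl (m+1) e ≤ MMU.guess fl n e := MMU.guess_mono e hn
        omega
      · push_neg at hc
        rw [Filter.eventually_atTop]
        exact ⟨max e i, fun n hn hfn => absurd hfn (hc n hn)⟩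
    have hall := (Filter.eventually_all_finite (Set.finite_Iio i)).mpr hev
    filter_upwards [hall, Filter.eventually_ge_atTop i] with n hn hin
    refine MMU.le_tFun (MMU.le_Fb f hin hin) ?_
    intro e hen hfe
    have hig : i ≤ MMU.guess fl n e := by
      rcases lt_or_ge e i with h | h
      · exact hn e h hfe
      · exact le_trans h (MMU.self_le_guess n e)
    exact MMU.le_Fb f hig hin
  refine ⟨t, htc, hdom, ?_⟩
  apply Set.Subset.antisymm
  · -- BlumClass t ⊆ ⋃
    rintro g ⟨e, he, hev⟩
    have hfin : ∃ N, e ≤ N ∧ ∀ n, N ≤ n → fl e n (MMU.guess fl n e) = false := by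
      by_contra hcon
      push_neg at hcon
      have hbad : ∀ N : ℕ, ∃ x : List α, N ≤ x.length ∧
          ¬ ∃ m ∈ M.meas e x, m ≤ t x.length := by
        intro N
        obtain ⟨n, hn, hfn⟩ := hcon (max N e) (le_max_right _ _)
        simp only [ne_eq, Bool.not_eq_false] at hfn
        obtain ⟨x, hx, hnom⟩ := (hfail e n _).mp hfn
        refine ⟨x, by omega, ?_⟩
        rintro ⟨m, hm, hmt⟩
        have htle : t n ≤ MMU.Fb f (MMU.guess fl n e) n :=
          MMU.tFun_le_of_fail (by omega) hfn
        rw [hx] at hmt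
        exact hnom m (le_trans hmt htle) hm
      have hfinset := Filter.eventually_cofinite.mp hev
      obtain ⟨N, hN⟩ := (hfinset.image List.length).bddAbove
      obtain ⟨x, hxlen, hxbad⟩ := hbad (N+1)
      have hmem : x.length ∈ List.length '' {x : List α |
          ¬ ∃ m ∈ M.meas e x, m ≤ t x.length} := ⟨x, hxbad, rfl⟩
      have := hN hmem
      omega
    obtain ⟨N, heN, hstab⟩ := hfin
    have hstab' : ∀ k, N ≤ k → fl e k (MMU.guess fl k e) = false := hstab
    have hstable := MMU.guess_stable heN hstab'
    set v := MMU.guess fl N e with hv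
    refine Set.mem_iUnion.mpr ⟨v, e, he, ?_⟩
    have h1 : ∀ᶠ x : List α in Filter.cofinite,
        N ≤ x.length ∧ MMU.Fb f v x.length ≤ f v x.length := by
      refine hlen (fun n => N ≤ n ∧ MMU.Fb f v n ≤ f v n) ?_
      filter_upwards [MMU.Fb_ae_le f hb v, Filter.eventually_ge_atTop N] with n h1 h2
      exact ⟨h2, h1⟩
    filter_upwards [h1] with x hx
    obtain ⟨hxN, hxF⟩ := hx
    have hflx : fl e x.length v = false := by
      have := hstab x.length hxN
      rwa [hstable x.length hxN] at this
    obtain ⟨m, hm, hmle⟩ := hnofail e x.length v hflx x rfl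
    exact ⟨m, hm, le_trans hmle hxF⟩
  · -- ⋃ ⊆ BlumClass t
    rintro g hg
    rw [Set.mem_iUnion] at hg
    obtain ⟨i, e, he, hev⟩ := hg
    refine ⟨e, he, ?_⟩
    filter_upwards [hev, hlen _ (hdom i)] with x hx hfi
    obtain ⟨m, hm, hmle⟩ := hx
    exact ⟨m, hm, le_trans hmle hfi⟩
end

section
/- The family polylog = {f_i | i ∈ ℕ} with f_i(n) = (⌊log₂ n⌋)^i is an acceptable collection; that is, it satisfies conditions (a)–(e). -/
open Filter

lemma pow_primrec : Primrec₂ (fun a b : ℕ => a ^ b) := by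
  have h := Primrec.nat_rec' (f := fun p : ℕ × ℕ => p.2) (g := fun _ => 1)
    (h := fun p q => q.2 * p.1) Primrec.snd (Primrec.const 1)
    (Primrec.nat_mul.comp (Primrec.snd.comp Primrec.snd) (Primrec.fst.comp Primrec.fst)).to₂
  refine Primrec₂.of_eq (Primrec.to₂ h) ?_
  intro a b
  induction b with
  | zero => rfl
  | succ b ih => simpa [pow_succ] using by simp [ih]

lemma log2_eq_findGreatest (n : ℕ) :
    Nat.log 2 n = Nat.findGreatest (fun k => 2 ^ k ≤ n) n := by
  rcases eq_or_ne n 0 with rfl | hn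
  · simp [Nat.findGreatest]
  · symm
    rw [Nat.findGreatest_eq_iff]
    refine ⟨Nat.log_le_self 2 n, fun _ => Nat.pow_log_le_self 2 hn, fun m hm _ hle => ?_⟩
    have h1 : n < 2 ^ m := lt_of_lt_of_le (Nat.lt_pow_succ_log_self (by norm_num) n)
      (Nat.pow_le_pow_right (by norm_num) hm)
    omega

lemma log2_primrec : Primrec (Nat.log 2) := by
  have hp : PrimrecRel (fun n k : ℕ => 2 ^ k ≤ n) :=
    Primrec.nat_le.comp₂ (pow_primrec.comp₂ (Primrec₂.const 2) Primrec₂.right) Primrec₂.left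
  exact (Primrec.nat_findGreatest Primrec.id hp).of_eq fun n => (log2_eq_findGreatest n).symm

-- t ^ a ≤ 2 ^ t eventually
lemma ev_pow_le_two_pow (a : ℕ) : ∀ᶠ t : ℕ in atTop, t ^ a ≤ 2 ^ t := by
  have h := (isLittleO_pow_const_const_pow_of_one_lt (R := ℝ) a
    (by norm_num : (1:ℝ) < 2)).bound one_pos
  filter_upwards [h] with t ht
  have h2 : (t:ℝ) ^ a ≤ (2:ℝ) ^ t := by
    have := ht
    simp only [norm_pow, Real.norm_natCast, Real.norm_ofNat, one_mul] at this
    calc (t:ℝ) ^ a = ‖(t:ℝ)‖ ^ a := by simp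
    _ ≤ ‖(2:ℝ) ^ t‖ := by simpa [norm_pow] using ht
    _ = (2:ℝ) ^ t := by simp [abs_of_nonneg]
  exact_mod_cast h2

lemma tendsto_log2 : Tendsto (Nat.log 2) atTop atTop := by
  apply tendsto_atTop_atTop.2
  intro b
  exact ⟨2 ^ b, fun n hn => by
    simpa [Nat.log_pow (by norm_num : 1 < 2)] using Nat.log_mono_right (b := 2) hn⟩

lemma ev_log_pow_le (a : ℕ) : ∀ᶠ n : ℕ in atTop, (Nat.log 2 n) ^ a ≤ n := by
  filter_upwards [tendsto_log2.eventually (ev_pow_le_two_pow a),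
    eventually_ge_atTop 1] with n h1 h2
  exact h1.trans (Nat.pow_log_le_self 2 (by omega))

lemma list_le_foldr_max (l : List ℕ) : ∀ j ∈ l, j ≤ l.foldr max 0 := by
  induction l with
  | nil => simp
  | cons a l ih =>
    intro j hj
    rcases List.mem_cons.1 hj with rfl | hj
    · simp
    · exact le_trans (ih j hj) (by simp)

/-- The polylogarithmic functions `f i n = (⌊log₂ n⌋) ^ i` form an acceptable collection. -/
theorem polylog_acceptable :
    AcceptableCollection (fun i n => (Nat.log 2 n) ^ i) := by
  refine ⟨?_, ?_, ?_, ?_, ?_⟩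
  · -- (a) computable
    exact (pow_primrec.comp (log2_primrec.comp Primrec.snd) Primrec.fst).to₂.to_comp
  · -- (b)
    intro i j hij
    filter_upwards [eventually_ge_atTop 2] with n hn
    exact Nat.pow_le_pow_right (Nat.log_pos (by norm_num) hn) hij
  · -- (c)
    intro i a b hab
    exact Nat.pow_le_pow_left (Nat.log_mono_right hab) i
  · -- (d)
    exact ⟨1, fun B => ⟨2 ^ (B + 1), by
      simp [Nat.log_pow (by norm_num : 1 < 2)]⟩⟩
  · -- (e)
    intro i js C
    set L := js.length with hL
    set M := js.foldr max 0 + 1 with hM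
    set D := L + C * (2 + L) with hD
    refine ⟨2 * i, ?_⟩
    filter_upwards [tendsto_log2.eventually (eventually_ge_atTop (max D 3)),
      ev_log_pow_le (M + 1), eventually_ge_atTop 2] with n hlog hMn hn2
    set t := Nat.log 2 n with ht
    have ht3 : 3 ≤ t := le_trans (le_max_right _ _) hlog
    have htD : D ≤ t := le_trans (le_max_left _ _) hlog
    have ht1 : 1 ≤ t := by omega
    -- bound the sums
    have hS : (js.map fun j => t ^ j).sum ≤ L * t ^ M := by
      have := List.sum_le_card_nsmul (js.map fun j => t ^ j) (t ^ M) ?_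
      · simpa [hL, smul_eq_mul] using this
      · intro x hx
        obtain ⟨j, hj, rfl⟩ := List.mem_map.1 hx
        exact Nat.pow_le_pow_right ht1 (by have := list_le_foldr_max js j hj; omega)
    have hT : (js.dropLast.map fun j => Nat.log 2 (1 + t ^ j)).sum ≤ L * t ^ M := by
      have h1 := List.sum_le_card_nsmul (js.dropLast.map fun j => Nat.log 2 (1 + t ^ j))
        (t ^ M) ?_
      · rw [smul_eq_mul, List.length_map, List.length_dropLast] at h1
        exact h1.trans (Nat.mul_le_mul_right _ (by omega))
      · intro x hx
        obtain ⟨j, hj, rfl⟩ := List.mem_map.1 hx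
        have hjle : j ≤ M := by
          have := list_le_foldr_max js j (List.dropLast_subset js hj); omega
        have : Nat.log 2 (1 + t ^ j) < 1 + t ^ j :=
          Nat.log_lt_self 2 (by omega)
        have htj : t ^ j ≤ t ^ M := Nat.pow_le_pow_right ht1 hjle
        omega
    have h1M : 1 ≤ t ^ M := Nat.one_le_pow _ _ (by omega)
    have htM : t ≤ t ^ M := by
      calc t = t ^ 1 := (pow_one t).symm
      _ ≤ t ^ M := Nat.pow_le_pow_right ht1 (by omega)
    set arg := n + (js.map fun j => t ^ j).sum +
        C * (1 + t + (js.dropLast.map fun j => Nat.log 2 (1 + t ^ j)).sum) with harg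
    have hargle : arg ≤ n + D * t ^ M := by
      have : C * (1 + t + (js.dropLast.map fun j => Nat.log 2 (1 + t ^ j)).sum)
          ≤ C * ((2 + L) * t ^ M) := by
        apply Nat.mul_le_mul_left
        calc 1 + t + (js.dropLast.map fun j => Nat.log 2 (1 + t ^ j)).sum
            ≤ t ^ M + t ^ M + L * t ^ M := by omega
        _ = (2 + L) * t ^ M := by ring
      calc arg ≤ n + L * t ^ M + C * ((2 + L) * t ^ M) := by omega
      _ = n + D * t ^ M := by rw [hD]; ring
    have hDt : D * t ^ M ≤ n := by
      calc D * t ^ M ≤ t * t ^ M := Nat.mul_le_mul_right _ htD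
      _ = t ^ (M + 1) := by ring
      _ ≤ n := hMn
    have harg2 : arg ≤ n * n := by
      have : arg ≤ 2 * n := by omega
      calc arg ≤ 2 * n := this
      _ ≤ n * n := Nat.mul_le_mul_right _ hn2
    -- log of arg
    have hargpos : arg ≠ 0 := by omega
    have hlogarg : Nat.log 2 arg ≤ 2 * t + 1 := by
      have h2 : arg < 2 ^ (2 * t + 2) := by
        calc arg ≤ n * n := harg2
        _ < 2 ^ (t + 1) * 2 ^ (t + 1) := by
          have := Nat.lt_pow_succ_log_self (by norm_num : 1 < 2) n
          exact Nat.mul_lt_mul_of_lt_of_lt this this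
        _ = 2 ^ (2 * t + 2) := by rw [← pow_add]; ring_nf
      have := (Nat.log_lt_iff_lt_pow (by norm_num : 1 < 2) hargpos).2 h2
      omega
    calc (Nat.log 2 arg) ^ i ≤ (3 * t) ^ i := Nat.pow_le_pow_left (by omega) i
    _ = 3 ^ i * t ^ i := mul_pow 3 t i
    _ ≤ t ^ i * t ^ i := Nat.mul_le_mul_right _ (Nat.pow_le_pow_left ht3 i)
    _ = t ^ (2 * i) := by rw [← pow_add]; ring_nf
end
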